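/- arXiv:2601.01858 — 2 statements merged into one kernel-verified Lean document; each statement's English description precedes it below -/
import Mathlib

section
/- Let Ψ = (ψ₁,…,ψ_N) and Φ = (φ₁,…,φ_N) be two N-tuples of vectors in ℂ^d such that ⟪ψ_i,ψ_j⟫ ≠ 0 and ⟪φ_i,φ_j⟫ ≠ 0 for all i, j ∈ {1,…,N} (i.e., both frame graphs are complete). Then Ψ and Φ are jointly projectively unitarily equivalent if and only if all triple products agree: Δ_{ijk}(Ψ) = Δ_{ijk}(Φ) for all i, j, k ∈ {1,…,N}, where Δ_{ijk}(Ψ) = ⟪ψ_i,ψ_j⟫ ⟪ψ_j,ψ_k⟫ ⟪ψ_k,ψ_i⟫. -/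
set_option maxHeartbeats 1000000
set_option synthInstance.maxHeartbeats 400000
set_option linter.unusedSectionVars false

open scoped ComplexConjugate

section Aux
variable {E : Type*} [NormedAddCommGroup E] [InnerProductSpace ℂ E] [FiniteDimensional ℂ E]

lemma map_unitary' {N : ℕ} (M L : (Fin N → ℂ) →ₗ[ℂ] E)
    (key : ∀ a b, (inner ℂ (M a) (M b) : ℂ) = inner ℂ (L a) (L b)) :
    ∃ U : E ≃ₗᵢ[ℂ] E, ∀ a, L a = U (M a) := by
  classical
  have hker : LinearMap.ker M ≤ LinearMap.ker L := by
    intro a ha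
    rw [LinearMap.mem_ker] at ha ⊢
    rw [← inner_self_eq_zero (𝕜 := ℂ), ← key, ha, inner_zero_left]
  set f₀ : ((Fin N → ℂ) ⧸ LinearMap.ker M) →ₗ[ℂ] E :=
    (LinearMap.ker M).liftQ L hker with hf₀
  set e := M.quotKerEquivRange with he
  set g : (LinearMap.range M) →ₗ[ℂ] E := f₀ ∘ₗ (e.symm : _ →ₗ[ℂ] _) with hg
  have hgM : ∀ a : Fin N → ℂ, ∀ hx : M a ∈ LinearMap.range M, g ⟨M a, hx⟩ = L a := by
    intro a hx
    have h5 : e.symm ⟨M a, hx⟩ = Submodule.Quotient.mk a :=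
      M.quotKerEquivRange_symm_apply_image a hx
    simp only [hg, LinearMap.coe_comp, LinearEquiv.coe_coe, Function.comp_apply, h5, hf₀,
      Submodule.liftQ_apply]
  have hinner : ∀ x y : LinearMap.range M, (inner ℂ (g x) (g y) : ℂ) = inner ℂ x y := by
    rintro ⟨x, hx⟩ ⟨y, hy⟩
    obtain ⟨a, rfl⟩ := id hx
    obtain ⟨b, rfl⟩ := id hy
    rw [hgM a hx, hgM b hy, ← key, Submodule.coe_inner]
  set fS : (LinearMap.range M) →ₗᵢ[ℂ] E := g.isometryOfInner hinner with hfS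
  set U' : E →ₗᵢ[ℂ] E := fS.extend with hU'
  refine ⟨U'.toLinearIsometryEquiv rfl, fun a => ?_⟩
  have hmem : M a ∈ LinearMap.range M := ⟨a, rfl⟩
  have h1 : U'.toLinearIsometryEquiv rfl (M a) = U' (M a) := U'.toLinearIsometryEquiv_apply rfl _
  have h2 : U' (M a) = fS ⟨M a, hmem⟩ := fS.extend_apply ⟨M a, hmem⟩
  rw [h1, h2]
  exact (hgM a hmem).symm

noncomputable def lcAux {N : ℕ} (v : Fin N → E) : (Fin N → ℂ) →ₗ[ℂ] E where
  toFun a := ∑ k, a k • v k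
  map_add' a b := by simp [add_smul, Finset.sum_add_distrib]
  map_smul' c a := by simp [smul_smul, Finset.smul_sum]

lemma lcAux_single {N : ℕ} (v : Fin N → E) (k : Fin N) :
    lcAux v (Pi.single k 1) = v k := by
  simp [lcAux, Pi.single_apply]

lemma inner_lcAux {N : ℕ} (v w : Fin N → E) (a b : Fin N → ℂ) :
    (inner ℂ (lcAux v a) (lcAux w b) : ℂ) =
      ∑ j, ∑ k, conj (a j) * b k * inner ℂ (v j) (w k) := by
  simp only [lcAux, LinearMap.coe_mk, AddHom.coe_mk]
  rw [sum_inner]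
  refine Finset.sum_congr rfl fun j _ => ?_
  rw [inner_sum]
  refine Finset.sum_congr rfl fun k _ => ?_
  rw [inner_smul_left, inner_smul_right]; ring

lemma gram_unitary {N : ℕ} (v w : Fin N → E)
    (h : ∀ i j, (inner ℂ (v i) (v j) : ℂ) = inner ℂ (w i) (w j)) :
    ∃ U : E ≃ₗᵢ[ℂ] E, ∀ k, w k = U (v k) := by
  obtain ⟨U, hU⟩ := map_unitary' (lcAux v) (lcAux w) (fun a b => by
    rw [inner_lcAux, inner_lcAux]
    exact Finset.sum_congr rfl fun j _ => Finset.sum_congr rfl fun k _ => by rw [h])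
  exact ⟨U, fun k => by
    have := hU (Pi.single k 1)
    rwa [lcAux_single, lcAux_single] at this⟩

lemma cube_eq {x y : ℝ} (hx : 0 ≤ x) (hy : 0 ≤ y) (h : x * x * x = y * y * y) : x = y := by
  have h3 : x ^ 3 = y ^ 3 := by linear_combination h
  exact (pow_left_strictMonoOn₀ (by norm_num : (3:ℕ) ≠ 0)).injOn hx hy h3

end Aux

/-- Two `N`-tuples of vectors in `ℂ^d` are jointly projectively unitarily equivalent
(there are a unitary `U` and phases `α_k` with `φ_k = e^{iα_k} U ψ_k`). -/
def JointProjUnitaryEquiv {N d : ℕ} (ψ φ : Fin N → EuclideanSpace ℂ (Fin d)) : Prop :=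
  ∃ U : EuclideanSpace ℂ (Fin d) ≃ₗᵢ[ℂ] EuclideanSpace ℂ (Fin d), ∃ α : Fin N → ℝ,
    ∀ k, φ k = Complex.exp (α k * Complex.I) • U (ψ k)

/-- The triple product `Δ_{ijk}(Ψ) = ⟪ψ_i,ψ_j⟫ ⟪ψ_j,ψ_k⟫ ⟪ψ_k,ψ_i⟫`. -/
noncomputable def tripleProduct {N d : ℕ} (ψ : Fin N → EuclideanSpace ℂ (Fin d))
    (i j k : Fin N) : ℂ :=
  (inner ℂ (ψ i) (ψ j) : ℂ) * (inner ℂ (ψ j) (ψ k) : ℂ) * (inner ℂ (ψ k) (ψ i) : ℂ)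

/-- If all pairwise inner products of `Ψ` and of `Φ` are nonzero (complete frame graphs),
then `Ψ` and `Φ` are jointly projectively unitarily equivalent iff all their triple
products agree. -/
theorem jointProjUnitaryEquiv_iff_tripleProducts {N d : ℕ}
    (ψ φ : Fin N → EuclideanSpace ℂ (Fin d))
    (hψ : ∀ i j, (inner ℂ (ψ i) (ψ j) : ℂ) ≠ 0)
    (hφ : ∀ i j, (inner ℂ (φ i) (φ j) : ℂ) ≠ 0) :
    JointProjUnitaryEquiv ψ φ ↔
      ∀ i j k, tripleProduct ψ i j k = tripleProduct φ i j k := by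
  constructor
  · rintro ⟨U, α, hU⟩ i j k
    set c : Fin N → ℂ := fun x => Complex.exp (α x * Complex.I) with hc
    have hin : ∀ a b : Fin N,
        (inner ℂ (φ a) (φ b) : ℂ) = conj (c a) * c b * inner ℂ (ψ a) (ψ b) := by
      intro a b
      rw [hU a, hU b, inner_smul_left, inner_smul_right, LinearIsometryEquiv.inner_map_map]
      ring
    have hcc : ∀ x : Fin N, conj (c x) * c x = 1 := by
      intro x
      rw [hc]
      rw [← Complex.exp_conj]
      rw [← Complex.exp_add]
      simp [Complex.exp_zero]
    simp only [tripleProduct, hin]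
    linear_combination
      (-(conj (c j) * c j * (conj (c k) * c k)) *
        ((inner ℂ (ψ i) (ψ j) : ℂ) * (inner ℂ (ψ j) (ψ k) : ℂ) * (inner ℂ (ψ k) (ψ i) : ℂ))) * hcc i +
      (-(conj (c k) * c k) *
        ((inner ℂ (ψ i) (ψ j) : ℂ) * (inner ℂ (ψ j) (ψ k) : ℂ) * (inner ℂ (ψ k) (ψ i) : ℂ))) * hcc j +
      (-((inner ℂ (ψ i) (ψ j) : ℂ) * (inner ℂ (ψ j) (ψ k) : ℂ) * (inner ℂ (ψ k) (ψ i) : ℂ))) * hcc k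
  · intro h
    rcases Nat.eq_zero_or_pos N with hN | hN
    · subst hN
      exact ⟨LinearIsometryEquiv.refl ℂ _, finZeroElim, fun k => k.elim0⟩
    set z : Fin N := ⟨0, hN⟩ with hz
    set p : Fin N → Fin N → ℂ := fun a b => inner ℂ (ψ a) (ψ b) with hp
    set q : Fin N → Fin N → ℂ := fun a b => inner ℂ (φ a) (φ b) with hq
    have hpc : ∀ a b, conj (p a b) = p b a := fun a b => inner_conj_symm _ _
    have hqc : ∀ a b, conj (q a b) = q b a := fun a b => inner_conj_symm _ _
    -- step 1 : p z z = q z z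
    have hzz : p z z = q z z := by
      have h3 : p z z * p z z * p z z = q z z * q z z * q z z := h z z z
      have hps : p z z = ((‖ψ z‖ ^ 2 : ℝ) : ℂ) := by
        rw [hp]; exact_mod_cast inner_self_eq_norm_sq_to_K (𝕜 := ℂ) (ψ z)
      have hqs : q z z = ((‖φ z‖ ^ 2 : ℝ) : ℂ) := by
        rw [hq]; exact_mod_cast inner_self_eq_norm_sq_to_K (𝕜 := ℂ) (φ z)
      rw [hps, hqs] at h3 ⊢
      have h4 : (‖ψ z‖ ^ 2) * (‖ψ z‖ ^ 2) * (‖ψ z‖ ^ 2)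
          = (‖φ z‖ ^ 2) * (‖φ z‖ ^ 2) * (‖φ z‖ ^ 2) := by exact_mod_cast h3
      have h5 : ‖ψ z‖ ^ 2 = ‖φ z‖ ^ 2 := cube_eq (sq_nonneg _) (sq_nonneg _) h4
      exact_mod_cast h5
    -- step 2 : ∀ k, p z k * p k z = q z k * q k z
    have hnorm : ∀ k, p z k * p k z = q z k * q k z := by
      intro k
      have h3 : p z k * p k z * p z z = q z k * q k z * q z z := h z k z
      rw [hzz] at h3
      exact mul_right_cancel₀ (hφ z z) h3
    -- the phases
    set c : Fin N → ℂ := fun k => q z k / p z k with hcdef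
    have hcconj : ∀ k, conj (c k) = q k z / p k z := by
      intro k; rw [hcdef]; simp only [map_div₀, hqc, hpc]
    -- Gram equality
    have hgram : ∀ j k, (inner ℂ ((c j) • ψ j) ((c k) • ψ k) : ℂ) = inner ℂ (φ j) (φ k) := by
      intro j k
      rw [inner_smul_left, inner_smul_right, hcconj, hcdef]
      show q j z / p j z * (q z k / p z k * p j k) = q j k
      have main : q j k * (p j z * p z k) * (q z j * q k z)
          = (q j z * q z k * p j k) * (q z j * q k z) := by
        have H1 : p z j * p j k * p k z = q z j * q j k * q k z := h z j k
        have nj := hnorm j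
        have nk := hnorm k
        linear_combination (-(p j z * p z k)) * H1 +
          (p j k * p z k * p k z) * nj + (p j k * q z j * q j z) * nk
      have main2 : q j k * (p j z * p z k) = q j z * q z k * p j k :=
        mul_right_cancel₀ (mul_ne_zero (hφ z j) (hφ k z)) main
      have e1 : p j z ≠ 0 := hψ j z
      have e2 : p z k ≠ 0 := hψ z k
      field_simp [e1, e2]
      linear_combination -main2
    obtain ⟨U, hU⟩ := gram_unitary (fun k => c k • ψ k) φ hgram
    -- phases : |c k| = 1
    have habs : ∀ k, ‖c k‖ = 1 := by
      intro k
      have h1 : (Complex.normSq (p z k) : ℂ) = Complex.normSq (q z k) := by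
        rw [Complex.normSq_eq_conj_mul_self, Complex.normSq_eq_conj_mul_self, hpc, hqc]
        linear_combination hnorm k
      have h2 : Complex.normSq (p z k) = Complex.normSq (q z k) := by exact_mod_cast h1
      have h3 : ‖p z k‖ = ‖q z k‖ := by
        rw [Complex.norm_def, Complex.norm_def, h2]
      rw [hcdef]
      simp only [norm_div]
      rw [← h3, div_self (by simpa using hψ z k)]
    refine ⟨U, fun k => (c k).arg, fun k => ?_⟩
    have hek : Complex.exp ((c k).arg * Complex.I) = c k := by
      have := Complex.norm_mul_exp_arg_mul_I (c k)
      rwa [habs k, Complex.ofReal_one, one_mul] at this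
    rw [hek, hU k, map_smul]
end

section
/- For every integer n ≥ 1 there exist polynomials p and q with rational coefficients in the n² variables {x_{ij} : 1 ≤ i, j ≤ n} such that for every n-tuple ρ₁,…,ρₙ of density matrices on ℂ², the complex number z = Tr(ρ₁ ρ₂ ⋯ ρₙ) satisfies the quadratic equation z² − 2 p(Δ) z + q(Δ) = 0, where p(Δ) and q(Δ) denote the evaluations of p and q at x_{ij} = Tr(ρ_i ρ_j). In particular, the nth-order Bargmann invariant of qubit states is determined, up to complex conjugation, by the second-order Bargmann invariants Tr(ρ_i ρ_j). -/
open scoped ComplexOrder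

open MvPolynomial

/-- A density matrix on `ℂ²`: positive semidefinite with trace 1. -/
def IsDensityMatrix2 (ρ : Matrix (Fin 2) (Fin 2) ℂ) : Prop :=
  ρ.PosSemidef ∧ ρ.trace = 1


abbrev M2 := Matrix (Fin 2) (Fin 2) ℂ

lemma traceless_11 {A : M2} (h : A.trace = 0) : A 1 1 = -A 0 0 := by
  rw [Matrix.trace_fin_two] at h; linear_combination h

lemma tripleId {A B C : M2} (hA : A.trace = 0) (hB : B.trace = 0) (hC : C.trace = 0) :
    A * B * C = (1/2 : ℂ) • ((B * C).trace • A - (A * C).trace • B + (A * B).trace • C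
      + (A * B * C).trace • (1 : M2)) := by
  have hA' := traceless_11 hA
  have hB' := traceless_11 hB
  have hC' := traceless_11 hC
  ext i j
  fin_cases i <;> fin_cases j <;>
    simp [Matrix.mul_apply, Fin.sum_univ_two, Matrix.trace_fin_two, Matrix.one_apply,
      hA', hB', hC', smul_eq_mul] <;> ring

lemma phiphi {A B C D E F : M2} (hA : A.trace = 0) (hB : B.trace = 0) (hC : C.trace = 0)
    (hD : D.trace = 0) (hE : E.trace = 0) (hF : F.trace = 0) :
    (A * B * C).trace * (D * E * F).trace =
      -(1/2 : ℂ) * ((A*D).trace * ((B*E).trace * (C*F).trace - (B*F).trace * (C*E).trace)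
        - (A*E).trace * ((B*D).trace * (C*F).trace - (B*F).trace * (C*D).trace)
        + (A*F).trace * ((B*D).trace * (C*E).trace - (B*E).trace * (C*D).trace)) := by
  have hA' := traceless_11 hA
  have hB' := traceless_11 hB
  have hC' := traceless_11 hC
  have hD' := traceless_11 hD
  have hE' := traceless_11 hE
  have hF' := traceless_11 hF
  simp only [Matrix.trace_fin_two, Matrix.mul_apply, Fin.sum_univ_two, hA', hB', hC', hD', hE', hF']
  ring

section Defs
variable {n : ℕ}

/-- traceless part of ρ k -/
noncomputable def mm (ρ : Fin n → M2) (k : Fin n) : M2 := ρ k - (1/2 : ℂ) • 1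

/-- trace of word in the m's -/
noncomputable def τv (ρ : Fin n → M2) (L : List (Fin n)) : ℂ := ((L.map (mm ρ)).prod).trace

noncomputable def φv (ρ : Fin n → M2) (t : Fin n × Fin n × Fin n) : ℂ :=
  (mm ρ t.1 * mm ρ t.2.1 * mm ρ t.2.2).trace

/-- evaluation of polynomials at second-order invariants -/
noncomputable def evA (ρ : Fin n → M2) : MvPolynomial (Fin n × Fin n) ℚ →ₐ[ℚ] ℂ :=
  MvPolynomial.aeval fun ij => (ρ ij.1 * ρ ij.2).trace

noncomputable def gP (i j : Fin n) : MvPolynomial (Fin n × Fin n) ℚ := X (i, j) - C (1/2)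

noncomputable def PhiP (t s : Fin n × Fin n × Fin n) : MvPolynomial (Fin n × Fin n) ℚ :=
  -(C (1/2)) * (gP t.1 s.1 * (gP t.2.1 s.2.1 * gP t.2.2 s.2.2 - gP t.2.1 s.2.2 * gP t.2.2 s.2.1)
    - gP t.1 s.2.1 * (gP t.2.1 s.1 * gP t.2.2 s.2.2 - gP t.2.1 s.2.2 * gP t.2.2 s.1)
    + gP t.1 s.2.2 * (gP t.2.1 s.1 * gP t.2.2 s.2.1 - gP t.2.1 s.2.1 * gP t.2.2 s.1))

variable {ρ : Fin n → M2} (hρ : ∀ k, (ρ k).trace = 1)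

include hρ in
lemma mm_trace (k : Fin n) : (mm ρ k).trace = 0 := by
  simp [mm, hρ k]

lemma evA_C (r : ℚ) : evA ρ (C r) = (r : ℂ) := by
  simp [evA]

include hρ in
lemma evA_gP (i j : Fin n) : evA ρ (gP i j) = (mm ρ i * mm ρ j).trace := by
  have : (mm ρ i * mm ρ j).trace = (ρ i * ρ j).trace - 1/2 := by
    simp only [mm, Matrix.sub_mul, Matrix.mul_sub, Matrix.smul_mul, Matrix.mul_smul,
      Matrix.trace_sub, Matrix.trace_smul, Matrix.one_mul, Matrix.mul_one, Matrix.trace_one,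
      hρ i, hρ j, smul_eq_mul, Fintype.card_fin]
    norm_num
  rw [this]
  simp [gP, evA]

include hρ in
lemma evA_PhiP (t s : Fin n × Fin n × Fin n) :
    evA ρ (PhiP t s) = φv ρ t * φv ρ s := by
  rw [φv, φv, phiphi (mm_trace hρ _) (mm_trace hρ _) (mm_trace hρ _) (mm_trace hρ _)
    (mm_trace hρ _) (mm_trace hρ _)]
  simp only [PhiP, map_mul, map_add, map_sub, map_neg, evA_C, evA_gP hρ]
  norm_num


include hρ in
lemma step1 (a b c : Fin n) (L : List (Fin n)) :
    τv ρ (a::b::c::L) = (1/2 : ℂ) * ((mm ρ b * mm ρ c).trace * τv ρ (a::L)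
      - (mm ρ a * mm ρ c).trace * τv ρ (b::L)
      + (mm ρ a * mm ρ b).trace * τv ρ (c::L)
      + φv ρ (a,b,c) * τv ρ L) := by
  have h := tripleId (mm_trace hρ a) (mm_trace hρ b) (mm_trace hρ c)
  simp only [τv, φv, List.map_cons, List.prod_cons, ← mul_assoc]
  rw [h]
  simp only [Matrix.smul_mul, Matrix.sub_mul, Matrix.add_mul, Matrix.one_mul,
    Matrix.trace_smul, Matrix.trace_add, Matrix.trace_sub, smul_eq_mul, mm_trace hρ,
    Matrix.trace_one, Fintype.card_fin, Nat.cast_ofNat]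
  ring

end Defs


lemma sum_helper {α : Type*} [Fintype α] [DecidableEq α] (c u v w E4 : ℂ)
    (f1 f2 f3 φ : α → ℂ) (t0 : α) :
    ∑ t, (c * (u * f1 t - v * f2 t + w * f3 t + if t = t0 then E4 else 0)) * φ t
      = c * (u * ∑ t, f1 t * φ t) - c * (v * ∑ t, f2 t * φ t)
        + c * (w * ∑ t, f3 t * φ t) + c * (E4 * φ t0) := by
  have : ∀ t : α, (c * (u * f1 t - v * f2 t + w * f3 t + if t = t0 then E4 else 0)) * φ t
      = c * (u * (f1 t * φ t)) - c * (v * (f2 t * φ t)) + c * (w * (f3 t * φ t))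
        + (if t = t0 then c * (E4 * φ t) else 0) := by
    intro t; split <;> ring
  simp only [this]
  rw [Finset.sum_add_distrib, Finset.sum_add_distrib, Finset.sum_sub_distrib,
    Finset.sum_ite_eq' Finset.univ t0, ← Finset.mul_sum, ← Finset.mul_sum, ← Finset.mul_sum,
    ← Finset.mul_sum, ← Finset.mul_sum, ← Finset.mul_sum]
  simp

lemma sum_helper2 {α : Type*} [Fintype α] (φabc : ℂ) (f4 φ : α → ℂ) :
    ∑ t, f4 t * (φabc * φ t) = φabc * ∑ t, f4 t * φ t := by
  rw [Finset.mul_sum]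
  exact Finset.sum_congr rfl fun t _ => by ring

section Main
variable {n : ℕ}

lemma lemA (N : ℕ) : ∀ L : List (Fin n), L.length ≤ N →
    ∃ (e : MvPolynomial (Fin n × Fin n) ℚ)
      (f : Fin n × Fin n × Fin n → MvPolynomial (Fin n × Fin n) ℚ),
      ∀ (ρ : Fin n → M2), (∀ k, (ρ k).trace = 1) →
        τv ρ L = evA ρ e + ∑ t : Fin n × Fin n × Fin n, evA ρ (f t) * φv ρ t := by
  induction N with
  | zero =>
    intro L hL
    have hLnil : L = [] := List.eq_nil_of_length_eq_zero (Nat.le_zero.mp hL)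
    subst hLnil
    refine ⟨C 2, 0, fun ρ hρ => ?_⟩
    simp [τv, evA_C, Fintype.card_fin]
  | succ N IH =>
    intro L hL
    match L with
    | [] =>
      refine ⟨C 2, 0, fun ρ hρ => ?_⟩
      simp [τv, evA_C, Fintype.card_fin]
    | [x] =>
      refine ⟨0, 0, fun ρ hρ => ?_⟩
      simp [τv, mm_trace hρ]
    | [x, y] =>
      refine ⟨gP x y, 0, fun ρ hρ => ?_⟩
      simp [τv, evA_gP hρ]
    | a :: b :: c :: L'' =>
      have hlen : L''.length + 3 ≤ N + 1 := by simp at hL; omega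
      obtain ⟨e₁, f₁, h₁⟩ := IH (a :: L'') (by simp; omega)
      obtain ⟨e₂, f₂, h₂⟩ := IH (b :: L'') (by simp; omega)
      obtain ⟨e₃, f₃, h₃⟩ := IH (c :: L'') (by simp; omega)
      obtain ⟨e₄, f₄, h₄⟩ := IH L'' (by omega)
      refine ⟨C (1/2 : ℚ) * (gP b c * e₁ - gP a c * e₂ + gP a b * e₃
          + ∑ t : Fin n × Fin n × Fin n, f₄ t * PhiP (a,b,c) t),
        fun t => C (1/2 : ℚ) * (gP b c * f₁ t - gP a c * f₂ t + gP a b * f₃ t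
          + if t = (a,b,c) then e₄ else 0), fun ρ hρ => ?_⟩
      rw [step1 hρ, h₁ ρ hρ, h₂ ρ hρ, h₃ ρ hρ, h₄ ρ hρ]
      simp only [map_mul, map_add, map_sub, map_sum, evA_C, apply_ite (evA ρ), map_zero,
        evA_gP hρ, evA_PhiP hρ]
      rw [sum_helper, sum_helper2]
      push_cast
      ring

end Main

def subl {ι : Type*} : List ι → List (List ι × ℕ)
  | [] => [([], 0)]
  | a :: l => ((subl l).map fun p => (a :: p.1, p.2)) ++ ((subl l).map fun p => (p.1, p.2 + 1))

lemma expand {ι : Type*} (m : ι → M2) (c : ℂ) :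
    ∀ L : List ι, ((L.map fun i => m i + c • 1).prod)
      = ((subl L).map fun p => c ^ p.2 • ((p.1.map m).prod)).sum
  | [] => by simp [subl]
  | a :: L => by
    rw [List.map_cons, List.prod_cons, expand m c L]
    simp only [subl, List.map_append, List.map_map, List.sum_append, Function.comp_def]
    rw [add_mul]
    congr 1
    · rw [← List.sum_map_mul_left]
      congr 1
      refine List.map_congr_left fun p _ => ?_
      rw [List.map_cons, List.prod_cons, mul_smul_comm]
    · rw [Matrix.smul_mul, Matrix.one_mul, List.smul_sum, List.map_map]
      congr 1
      refine List.map_congr_left fun p _ => ?_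
      simp only [Function.comp_def, smul_smul, pow_succ]
      ring_nf

lemma trace_list_sum (l : List M2) : l.sum.trace = (l.map Matrix.trace).sum := by
  induction l with
  | nil => simp
  | cons a l ih => simp [ih]

section Final
variable {n : ℕ}

lemma lemB (l : List (List (Fin n) × ℕ)) :
    ∃ (e : MvPolynomial (Fin n × Fin n) ℚ)
      (f : Fin n × Fin n × Fin n → MvPolynomial (Fin n × Fin n) ℚ),
      ∀ (ρ : Fin n → M2), (∀ k, (ρ k).trace = 1) →
        ((l.map fun p => ((1/2 : ℂ) ^ p.2) * τv ρ p.1).sum)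
          = evA ρ e + ∑ t : Fin n × Fin n × Fin n, evA ρ (f t) * φv ρ t := by
  induction l with
  | nil => exact ⟨0, 0, fun ρ hρ => by simp⟩
  | cons p l ih =>
    obtain ⟨e₁, f₁, h₁⟩ := lemA p.1.length p.1 le_rfl
    obtain ⟨e₂, f₂, h₂⟩ := ih
    refine ⟨C ((1/2 : ℚ) ^ p.2) * e₁ + e₂,
      fun t => C ((1/2 : ℚ) ^ p.2) * f₁ t + f₂ t, fun ρ hρ => ?_⟩
    simp only [List.map_cons, List.sum_cons, h₁ ρ hρ, h₂ ρ hρ, map_add, map_mul, evA_C]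
    have key : ∀ t : Fin n × Fin n × Fin n,
        ((((1/2 : ℚ) ^ p.2 : ℚ) : ℂ) * evA ρ (f₁ t) + evA ρ (f₂ t)) * φv ρ t
          = (((1/2 : ℚ) ^ p.2 : ℚ) : ℂ) * (evA ρ (f₁ t) * φv ρ t)
            + evA ρ (f₂ t) * φv ρ t := fun t => by ring
    simp only [key]
    rw [Finset.sum_add_distrib, ← Finset.mul_sum]
    push_cast
    ring

end Final

/-- For every `n ≥ 1`, there are polynomials `p, q` with rational coefficients in the
variables `x_{ij}` (`1 ≤ i,j ≤ n`) such that for every `n`-tuple of qubit density matrices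
`ρ₁, …, ρₙ`, the `n`th-order Bargmann invariant `z = Tr(ρ₁ ⋯ ρₙ)` satisfies
`z² - 2 p(Δ) z + q(Δ) = 0`, where `p(Δ), q(Δ)` are evaluations at `x_{ij} = Tr(ρ_i ρ_j)`.
Hence the `n`th-order Bargmann invariant of qubit states is determined, up to complex
conjugation, by the second-order invariants. -/
theorem qubit_bargmann_quadratic_from_second_order (n : ℕ) (hn : 1 ≤ n) :
    ∃ p q : MvPolynomial (Fin n × Fin n) ℚ,
      ∀ ρ : Fin n → Matrix (Fin 2) (Fin 2) ℂ, (∀ k, IsDensityMatrix2 (ρ k)) →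
        ∀ z : ℂ, z = Matrix.trace (List.prod (List.ofFn fun j : Fin n => ρ j)) →
          z ^ 2 -
            2 * (MvPolynomial.aeval (fun ij : Fin n × Fin n =>
              Matrix.trace (ρ ij.1 * ρ ij.2)) p) * z +
            (MvPolynomial.aeval (fun ij : Fin n × Fin n =>
              Matrix.trace (ρ ij.1 * ρ ij.2)) q) = 0 := by
  obtain ⟨E, F, hEF⟩ := lemB (n := n) (subl (List.finRange n))
  refine ⟨E, E * E - ∑ t : Fin n × Fin n × Fin n, ∑ s : Fin n × Fin n × Fin n,
    F t * F s * PhiP t s, ?_⟩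
  intro ρ hρd z hz
  have hρ : ∀ k, (ρ k).trace = 1 := fun k => (hρd k).2
  -- z as a sum over sub-words
  have hmap : (List.ofFn fun j : Fin n => ρ j)
      = (List.finRange n).map fun i => mm ρ i + (1/2 : ℂ) • 1 := by
    rw [List.ofFn_eq_map]
    exact List.map_congr_left fun i _ => by rw [mm, sub_add_cancel]
  have hzsum : z = ((subl (List.finRange n)).map
      fun p => ((1/2 : ℂ) ^ p.2) * τv ρ p.1).sum := by
    rw [hz, hmap, expand, trace_list_sum, List.map_map]
    congr 1
    exact List.map_congr_left fun p _ => by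
      simp [Function.comp_def, Matrix.trace_smul, τv, smul_eq_mul]
  set W : ℂ := ∑ t : Fin n × Fin n × Fin n, evA ρ (F t) * φv ρ t with hW
  have hzW : z = evA ρ E + W := by rw [hzsum, hEF ρ hρ]
  have hWW : W * W = evA ρ (∑ t : Fin n × Fin n × Fin n, ∑ s : Fin n × Fin n × Fin n,
      F t * F s * PhiP t s) := by
    rw [map_sum]
    rw [hW, Finset.sum_mul_sum]
    refine Finset.sum_congr rfl fun t _ => ?_
    rw [map_sum]
    refine Finset.sum_congr rfl fun s _ => ?_
    simp only [map_mul, evA_PhiP hρ]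
    ring
  have hp : (MvPolynomial.aeval (fun ij : Fin n × Fin n =>
      Matrix.trace (ρ ij.1 * ρ ij.2)) : MvPolynomial (Fin n × Fin n) ℚ →ₐ[ℚ] ℂ) = evA ρ := rfl
  rw [hp]
  rw [map_sub, map_mul, ← hWW]
  linear_combination (z - evA ρ E + W) * hzW
end
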